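/- In the Private Patient Problem with only double rooms, for any valid assignment the number of private patients alone in a room satisfies |S_F*| + |S_M*| ≤ 2α + βf + βm − (F* + M*) whenever α < F* + M*, where α = |R| − ⌈(F−F*)/2⌉ − ⌈(M−M*)/2⌉, βf = min((F−F*) mod 2, F*), βm = min((M−M*) mod 2, M*). (That is, the stated quantity is an upper bound on the objective in this regime.) -/
import Mathlib


theorem ppp_upper_bound {ι : Type*} (R : Finset ι) (F Fs M Ms : ℕ)
    (hF : Fs ≤ F) (hM : Ms ≤ M)
    (hfeas : (F + 1) / 2 + (M + 1) / 2 ≤ R.card)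
    (hα : R.card - (F - Fs + 1) / 2 - (M - Ms + 1) / 2 < Fs + Ms) :
    ∀ SF SFs SM SMs : Finset ι,
      SF ⊆ R → SFs ⊆ R → SM ⊆ R → SMs ⊆ R →
      Disjoint SF SFs → Disjoint SF SM → Disjoint SF SMs →
      Disjoint SFs SM → Disjoint SFs SMs → Disjoint SM SMs →
      F ≤ 2 * SF.card + SFs.card → SFs.card ≤ Fs →
      M ≤ 2 * SM.card + SMs.card → SMs.card ≤ Ms →
      SFs.card + SMs.card ≤
        2 * (R.card - (F - Fs + 1) / 2 - (M - Ms + 1) / 2)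
          + min ((F - Fs) % 2) Fs + min ((M - Ms) % 2) Ms - (Fs + Ms) := by
  classical
  intro SF SFs SM SMs hSF hSFs hSM hSMs d1 d2 d3 d4 d5 d6 h1 h2 h3 h4
  have hcard : SF.card + SFs.card + SM.card + SMs.card ≤ R.card := by
    have hu : (SF ∪ SFs ∪ SM ∪ SMs) ⊆ R := by
      intro x hx
      simp only [Finset.mem_union] at hx
      rcases hx with ((h|h)|h)|h
      exacts [hSF h, hSFs h, hSM h, hSMs h]
    have := Finset.card_le_card hu
    rwa [Finset.card_union_of_disjoint (by
        simp [Finset.disjoint_union_left, d3, d5, d6]),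
      Finset.card_union_of_disjoint (by
        simp [Finset.disjoint_union_left, d2, d4]),
      Finset.card_union_of_disjoint d1] at this
  omega
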